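/- arXiv:1507.07231 — 2 statements merged into one kernel-verified Lean document; each statement's English description precedes it below -/
import Mathlib

section
/- For every integer n ≥ 1 and every n-element subset I₀ of ℤ/2n, there exists a balanced bijection e from I₀ onto its complement (ℤ/2n) \ I₀. (This is the full combinatorial content of the paper's Lemma 3, 'every set of n indices is the index of some tubed Heegaard surface': the balanced condition expresses that each annulus, drawn from its left foot to its right foot in the positive cyclic direction, passes over complete shorter annuli only, so that the n annuli can be realized pairwise disjointly, attached in order of increasing length.) -/
open Finset

namespace BalancedAux

variable {n : ℕ} [NeZero (2 * n)]

/-- weight: +1 on `I₀`, −1 off it. -/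
def cw (I₀ : Finset (ZMod (2 * n))) (x : ZMod (2 * n)) : ℤ := if x ∈ I₀ then 1 else -1

/-- partial sums of weights along the positive cyclic direction starting after `i`. -/
def fs (I₀ : Finset (ZMod (2 * n))) (i : ZMod (2 * n)) (d : ℕ) : ℤ :=
  ∑ k ∈ Finset.Icc 1 d, cw I₀ (i + (k : ZMod (2 * n)))

lemma fs_zero (I₀ : Finset (ZMod (2 * n))) (i : ZMod (2 * n)) : fs I₀ i 0 = 0 := by
  simp [fs]

lemma fs_succ (I₀ : Finset (ZMod (2 * n))) (i : ZMod (2 * n)) (d : ℕ) :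
    fs I₀ i (d + 1) = fs I₀ i d + cw I₀ (i + ((d + 1 : ℕ) : ZMod (2 * n))) := by
  simpa [fs] using Finset.sum_Icc_succ_top (by omega)
    (fun k => cw I₀ (i + (k : ZMod (2 * n))))

lemma fs_add (I₀ : Finset (ZMod (2 * n))) (i : ZMod (2 * n)) (a b : ℕ) :
    fs I₀ i (a + b) = fs I₀ i a + fs I₀ (i + (a : ZMod (2 * n))) b := by
  induction b with
  | zero => simp [fs_zero]
  | succ b ih =>
      have : a + (b + 1) = (a + b) + 1 := by omega
      rw [this, fs_succ, ih, fs_succ]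
      have : i + ((a + b + 1 : ℕ) : ZMod (2 * n)) =
          i + (a : ZMod (2 * n)) + ((b + 1 : ℕ) : ZMod (2 * n)) := by
        push_cast; ring
      rw [this]; ring

lemma coe_val_add (i x : ZMod (2 * n)) : i + (((x - i).val : ℕ) : ZMod (2 * n)) = x := by
  simp [ZMod.natCast_val, ZMod.cast_id]

lemma sum_cw (I₀ : Finset (ZMod (2 * n))) (hI : I₀.card = n) :
    ∑ x : ZMod (2 * n), cw I₀ x = 0 := by
  classical
  rw [← Finset.sum_filter_add_sum_filter_not Finset.univ (fun x => x ∈ I₀)]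
  have h1 : Finset.univ.filter (fun x => x ∈ I₀) = I₀ := by
    ext x; simp
  have hcard : (Finset.univ.filter (fun x : ZMod (2 * n) => ¬ x ∈ I₀)).card = n := by
    have := Finset.card_filter_add_card_filter_not
      (s := (Finset.univ : Finset (ZMod (2 * n)))) (p := fun x => x ∈ I₀)
    have hu : (Finset.univ : Finset (ZMod (2 * n))).card = 2 * n := by
      simpa using ZMod.card (2 * n)
    rw [h1] at this
    omega
  have e1 : ∑ x ∈ Finset.univ.filter (fun x => x ∈ I₀), cw I₀ x = (n : ℤ) := by
    rw [h1]
    have h : ∀ x ∈ I₀, cw I₀ x = (1 : ℤ) := fun x hx => by simp [cw, hx]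
    rw [Finset.sum_congr rfl h]
    simp [hI]
  have e2 : ∑ x ∈ Finset.univ.filter (fun x : ZMod (2 * n) => ¬ x ∈ I₀), cw I₀ x = -(n : ℤ) := by
    have h : ∀ x ∈ Finset.univ.filter (fun x : ZMod (2 * n) => ¬ x ∈ I₀),
        cw I₀ x = (-1 : ℤ) := fun x hx => by
      simp only [Finset.mem_filter] at hx
      simp [cw, hx.2]
    rw [Finset.sum_congr rfl h]
    simp [hcard]
  rw [e1, e2]; ring

lemma fs_total (I₀ : Finset (ZMod (2 * n))) (hn : 1 ≤ n) (hI : I₀.card = n)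
    {i : ZMod (2 * n)} (hi : i ∈ I₀) : fs I₀ i (2 * n - 1) = -1 := by
  classical
  have hN : 2 ≤ 2 * n := by omega
  have key : fs I₀ i (2 * n - 1) = ∑ x ∈ Finset.univ.erase i, cw I₀ x := by
    refine Finset.sum_nbij' (fun k => i + (k : ZMod (2 * n))) (fun x => (x - i).val)
      ?_ ?_ ?_ ?_ ?_
    · intro k hk
      simp only [Finset.mem_Icc] at hk
      have hk2 : k < 2 * n := by omega
      have : ((k : ZMod (2 * n))).val = k := ZMod.val_cast_of_lt hk2
      simp only [Finset.mem_erase, Finset.mem_univ, and_true]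
      intro h
      have hz : ((k : ZMod (2 * n))) = 0 := by
        have := add_left_cancel (a := i) (b := (k : ZMod (2*n))) (c := 0)
        apply this
        simpa using h
      rw [hz] at this
      simp at this
      omega
    · intro x hx
      simp only [Finset.mem_erase, Finset.mem_univ, and_true] at hx
      have h0 : x - i ≠ 0 := sub_ne_zero.mpr hx
      have h1 : (x - i).val ≠ 0 := by
        intro h; exact h0 ((ZMod.val_eq_zero _).mp h)
      have h2 : (x - i).val < 2 * n := ZMod.val_lt _
      simp only [Finset.mem_Icc]; omega
    · intro k hk
      simp only [Finset.mem_Icc] at hk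
      have hk2 : k < 2 * n := by omega
      simp [ZMod.val_cast_of_lt hk2]
    · intro x hx
      exact coe_val_add i x
    · intro k hk; rfl
  rw [key]
  have := Finset.add_sum_erase Finset.univ (cw I₀) (Finset.mem_univ i)
  rw [sum_cw I₀ hI] at this
  have hcwi : cw I₀ i = 1 := by simp [cw, hi]
  rw [hcwi] at this
  linarith

lemma exists_hit (I₀ : Finset (ZMod (2 * n))) (hn : 1 ≤ n) (hI : I₀.card = n)
    {i : ZMod (2 * n)} (hi : i ∈ I₀) : ∃ d, 1 ≤ d ∧ fs I₀ i d = -1 :=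
  ⟨2 * n - 1, by omega, fs_total I₀ hn hI hi⟩

/-- the matching distance. -/
noncomputable def dIdx (I₀ : Finset (ZMod (2 * n))) (hn : 1 ≤ n) (hI : I₀.card = n)
    {i : ZMod (2 * n)} (hi : i ∈ I₀) : ℕ :=
  Nat.find (exists_hit I₀ hn hI hi)

variable (I₀ : Finset (ZMod (2 * n))) (hn : 1 ≤ n) (hI : I₀.card = n)

lemma dIdx_pos {i : ZMod (2 * n)} (hi : i ∈ I₀) : 1 ≤ dIdx I₀ hn hI hi :=
  (Nat.find_spec (exists_hit I₀ hn hI hi)).1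

lemma fs_dIdx {i : ZMod (2 * n)} (hi : i ∈ I₀) : fs I₀ i (dIdx I₀ hn hI hi) = -1 :=
  (Nat.find_spec (exists_hit I₀ hn hI hi)).2

lemma dIdx_le {i : ZMod (2 * n)} (hi : i ∈ I₀) : dIdx I₀ hn hI hi ≤ 2 * n - 1 :=
  Nat.find_min' _ ⟨by omega, fs_total I₀ hn hI hi⟩

lemma fs_nonneg {i : ZMod (2 * n)} (hi : i ∈ I₀) :
    ∀ d < dIdx I₀ hn hI hi, 0 ≤ fs I₀ i d := by
  intro d
  induction d with
  | zero => intro _; simp [fs_zero]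
  | succ d ih =>
      intro hd
      have hd' : d < dIdx I₀ hn hI hi := by omega
      have h0 := ih hd'
      have hne : fs I₀ i (d + 1) ≠ -1 := by
        intro h
        exact absurd ⟨by omega, h⟩ (Nat.find_min (exists_hit I₀ hn hI hi) hd)
      rw [fs_succ]
      have : cw I₀ (i + ((d + 1 : ℕ) : ZMod (2 * n))) = 1 ∨
          cw I₀ (i + ((d + 1 : ℕ) : ZMod (2 * n))) = -1 := by
        unfold cw; split <;> simp
      rw [fs_succ] at hne
      rcases this with h | h
      · rw [h]; omega
      · rw [h] at hne ⊢; omega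

lemma fs_pred {i : ZMod (2 * n)} (hi : i ∈ I₀) :
    fs I₀ i (dIdx I₀ hn hI hi - 1) = 0 ∧
    cw I₀ (i + ((dIdx I₀ hn hI hi : ℕ) : ZMod (2 * n))) = -1 := by
  set d := dIdx I₀ hn hI hi with hd
  have h1 : 1 ≤ d := dIdx_pos I₀ hn hI hi
  have hsp : d - 1 + 1 = d := by omega
  have := fs_succ I₀ i (d - 1)
  rw [hsp] at this
  have h2 : fs I₀ i d = -1 := fs_dIdx I₀ hn hI hi
  have h3 : 0 ≤ fs I₀ i (d - 1) := fs_nonneg I₀ hn hI hi _ (by omega)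
  have h4 : cw I₀ (i + ((d : ℕ) : ZMod (2 * n))) = 1 ∨
      cw I₀ (i + ((d : ℕ) : ZMod (2 * n))) = -1 := by
    unfold cw; split <;> simp
  rcases h4 with h | h <;> rw [h2] at this <;> rw [h] at this <;>
    constructor <;> omega

lemma dIdx_notMem {i : ZMod (2 * n)} (hi : i ∈ I₀) :
    i + ((dIdx I₀ hn hI hi : ℕ) : ZMod (2 * n)) ∉ I₀ := by
  have := (fs_pred I₀ hn hI hi).2
  unfold cw at this
  by_contra h
  simp [h] at this

lemma key {i₁ i₂ : ZMod (2 * n)} (h1 : i₁ ∈ I₀) (h2 : i₂ ∈ I₀) (m : ℕ)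
    (hm1 : 1 ≤ m) (hmi : i₂ = i₁ + (m : ZMod (2 * n)))
    (hsum : m + dIdx I₀ hn hI h2 = dIdx I₀ hn hI h1) : False := by
  set d₁ := dIdx I₀ hn hI h1 with hd₁
  set d₂ := dIdx I₀ hn hI h2 with hd₂
  have hsplit : fs I₀ i₁ (m + d₂) = fs I₀ i₁ m + fs I₀ i₂ d₂ := by
    rw [fs_add, ← hmi]
  rw [hsum, fs_dIdx I₀ hn hI h1, fs_dIdx I₀ hn hI h2] at hsplit
  have hm0 : fs I₀ i₁ m = 0 := by linarith
  have hcw : cw I₀ (i₁ + (m : ZMod (2 * n))) = 1 := by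
    rw [← hmi]; simp [cw, h2]
  have hms : m - 1 + 1 = m := by omega
  have := fs_succ I₀ i₁ (m - 1)
  rw [hms] at this
  rw [hcw, hm0] at this
  have hlt : m - 1 < d₁ := by
    have := dIdx_pos I₀ hn hI h2
    omega
  have := fs_nonneg I₀ hn hI h1 (m - 1) hlt
  omega

lemma card_filter_between (d : ℕ) (hd2 : d ≤ 2 * n - 1) (i : ZMod (2 * n))
    (P : ZMod (2 * n) → Prop) [DecidablePred P] :
    (Finset.univ.filter fun x => 0 < (x - i).val ∧ (x - i).val < d ∧ P x).card =
      ((Finset.Icc 1 (d - 1)).filter fun k : ℕ => P (i + (k : ZMod (2 * n)))).card := by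
  classical
  have hN : 1 ≤ n := by
    have := Nat.pos_of_ne_zero (NeZero.ne (2 * n))
    omega
  refine Finset.card_bij' (fun x _ => (x - i).val) (fun k _ => i + (k : ZMod (2 * n)))
    ?_ ?_ ?_ ?_
  · intro x hx
    simp only [Finset.mem_filter, Finset.mem_univ, true_and] at hx
    simp only [Finset.mem_filter, Finset.mem_Icc]
    refine ⟨⟨by omega, by omega⟩, ?_⟩
    rw [coe_val_add]
    exact hx.2.2
  · intro k hk
    simp only [Finset.mem_filter, Finset.mem_Icc] at hk
    have hklt : k < 2 * n := by omega
    have hval : ((i + (k : ZMod (2 * n))) - i).val = k := by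
      simp [ZMod.val_cast_of_lt hklt]
    simp only [Finset.mem_filter, Finset.mem_univ, true_and, hval]
    exact ⟨by omega, by omega, hk.2⟩
  · intro x hx
    exact coe_val_add i x
  · intro k hk
    simp only [Finset.mem_filter, Finset.mem_Icc] at hk
    have hklt : k < 2 * n := by omega
    simp [ZMod.val_cast_of_lt hklt]

lemma card_between {i : ZMod (2 * n)} (hi : i ∈ I₀) :
    (Finset.univ.filter fun x =>
        0 < (x - i).val ∧ (x - i).val < dIdx I₀ hn hI hi ∧ x ∈ I₀).card =
    (Finset.univ.filter fun x =>
        0 < (x - i).val ∧ (x - i).val < dIdx I₀ hn hI hi ∧ x ∉ I₀).card := by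
  classical
  set d := dIdx I₀ hn hI hi with hd
  have hd2 : d ≤ 2 * n - 1 := dIdx_le I₀ hn hI hi
  rw [card_filter_between d hd2 i (fun x => x ∈ I₀),
      card_filter_between d hd2 i (fun x => x ∉ I₀)]
  set s := Finset.Icc 1 (d - 1) with hs
  have hsplit := Finset.sum_filter_add_sum_filter_not s
    (fun k : ℕ => (i + (k : ZMod (2 * n))) ∈ I₀) (fun k => cw I₀ (i + (k : ZMod (2 * n))))
  have htot : ∑ k ∈ s, cw I₀ (i + (k : ZMod (2 * n))) = 0 := (fs_pred I₀ hn hI hi).1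
  have e1 : ∑ k ∈ s.filter (fun k : ℕ => (i + (k : ZMod (2 * n))) ∈ I₀),
      cw I₀ (i + (k : ZMod (2 * n))) =
      ((s.filter (fun k : ℕ => (i + (k : ZMod (2 * n))) ∈ I₀)).card : ℤ) := by
    have h : ∀ k ∈ s.filter (fun k : ℕ => (i + (k : ZMod (2 * n))) ∈ I₀),
        cw I₀ (i + (k : ZMod (2 * n))) = (1 : ℤ) := fun k hk => by
      simp only [Finset.mem_filter] at hk
      simp [cw, hk.2]
    rw [Finset.sum_congr rfl h]; simp
  have e2 : ∑ k ∈ s.filter (fun k : ℕ => ¬ (i + (k : ZMod (2 * n))) ∈ I₀),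
      cw I₀ (i + (k : ZMod (2 * n))) =
      -((s.filter (fun k : ℕ => ¬ (i + (k : ZMod (2 * n))) ∈ I₀)).card : ℤ) := by
    have h : ∀ k ∈ s.filter (fun k : ℕ => ¬ (i + (k : ZMod (2 * n))) ∈ I₀),
        cw I₀ (i + (k : ZMod (2 * n))) = (-1 : ℤ) := fun k hk => by
      simp only [Finset.mem_filter] at hk
      simp [cw, hk.2]
    rw [Finset.sum_congr rfl h]; simp
  rw [e1, e2, htot] at hsplit
  have : ((s.filter (fun k : ℕ => (i + (k : ZMod (2 * n))) ∈ I₀)).card : ℤ) =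
      ((s.filter (fun k : ℕ => ¬ (i + (k : ZMod (2 * n))) ∈ I₀)).card : ℤ) := by linarith
  exact_mod_cast this

end BalancedAux


/-- A bijection-candidate `e` from the index set `I₀ ⊆ ℤ/2n` to its complement is
*balanced* if for every `i ∈ I₀`, among the elements `x` of `ℤ/2n` lying strictly
between `i` and `e i` in the positive cyclic order (those `x` with
`0 < (x - i).val < (e i - i).val`), exactly as many belong to `I₀` as belong to
the complement `(ℤ/2n) \ I₀`. -/
def IsBalanced (n : ℕ) [NeZero (2 * n)] (I₀ : Finset (ZMod (2 * n)))
    (e : {i : ZMod (2 * n) // i ∈ I₀} → {x : ZMod (2 * n) // x ∉ I₀}) : Prop :=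
  ∀ i : {i : ZMod (2 * n) // i ∈ I₀},
    (Finset.univ.filter fun x : ZMod (2 * n) =>
        0 < (x - (i : ZMod (2 * n))).val ∧
        (x - (i : ZMod (2 * n))).val <
          ((e i : ZMod (2 * n)) - (i : ZMod (2 * n))).val ∧ x ∈ I₀).card =
    (Finset.univ.filter fun x : ZMod (2 * n) =>
        0 < (x - (i : ZMod (2 * n))).val ∧
        (x - (i : ZMod (2 * n))).val <
          ((e i : ZMod (2 * n)) - (i : ZMod (2 * n))).val ∧ x ∉ I₀).card

/-- For every integer `n ≥ 1` and every `n`-element subset `I₀` of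
`ℤ/2n`, there exists a balanced bijection `e` from `I₀` onto its complement
`(ℤ/2n) \ I₀`. -/
theorem exists_balanced_bijection (n : ℕ) (hn : 1 ≤ n) [NeZero (2 * n)]
    (I₀ : Finset (ZMod (2 * n))) (hI : I₀.card = n) :
    ∃ e : {i : ZMod (2 * n) // i ∈ I₀} → {x : ZMod (2 * n) // x ∉ I₀},
      Function.Bijective e ∧ IsBalanced n I₀ e := by
  classical
  refine ⟨fun i => ⟨i.1 + ((BalancedAux.dIdx I₀ hn hI i.2 : ℕ) : ZMod (2 * n)),
      BalancedAux.dIdx_notMem I₀ hn hI i.2⟩, ?_, ?_⟩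
  · rw [Fintype.bijective_iff_injective_and_card]
    constructor
    · intro i₁ i₂ heq
      by_contra hne
      have hvne : i₁.1 ≠ i₂.1 := fun h => hne (Subtype.ext h)
      set d₁ := BalancedAux.dIdx I₀ hn hI i₁.2 with hd₁def
      set d₂ := BalancedAux.dIdx I₀ hn hI i₂.2 with hd₂def
      have heq' : i₁.1 + ((d₁ : ℕ) : ZMod (2 * n)) = i₂.1 + ((d₂ : ℕ) : ZMod (2 * n)) :=
        congrArg Subtype.val heq
      set m := (i₂.1 - i₁.1).val with hmdef
      have hm1 : 1 ≤ m := by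
        have h0 : i₂.1 - i₁.1 ≠ 0 := sub_ne_zero.mpr (Ne.symm hvne)
        have : m ≠ 0 := fun h => h0 ((ZMod.val_eq_zero _).mp h)
        omega
      have hmlt : m < 2 * n := ZMod.val_lt _
      have hi2 : i₂.1 = i₁.1 + (m : ZMod (2 * n)) := (BalancedAux.coe_val_add i₁.1 i₂.1).symm
      have hd₁le : d₁ ≤ 2 * n - 1 := BalancedAux.dIdx_le I₀ hn hI i₁.2
      have hd₂le : d₂ ≤ 2 * n - 1 := BalancedAux.dIdx_le I₀ hn hI i₂.2
      have hd₁1 : 1 ≤ d₁ := BalancedAux.dIdx_pos I₀ hn hI i₁.2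
      have hd₂1 : 1 ≤ d₂ := BalancedAux.dIdx_pos I₀ hn hI i₂.2
      have h2 : i₁.1 + ((m + d₂ : ℕ) : ZMod (2 * n)) = i₁.1 + ((d₁ : ℕ) : ZMod (2 * n)) := by
        push_cast
        rw [← add_assoc, ← hi2]
        exact heq'.symm
      have h3 : ((m + d₂ : ℕ) : ZMod (2 * n)) = ((d₁ : ℕ) : ZMod (2 * n)) :=
        add_left_cancel h2
      have h4 : d₁ = (m + d₂) % (2 * n) := by
        have := congrArg ZMod.val h3
        rw [ZMod.val_natCast, ZMod.val_natCast, Nat.mod_eq_of_lt (by omega : d₁ < 2 * n)] at this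
        exact this.symm
      have hcases : m + d₂ = d₁ ∨ m + d₂ = d₁ + 2 * n := by
        by_cases h : m + d₂ < 2 * n
        · left
          rw [Nat.mod_eq_of_lt h] at h4
          omega
        · right
          rw [Nat.mod_eq_sub_mod (le_of_not_gt h),
            Nat.mod_eq_of_lt (by omega : m + d₂ - 2 * n < 2 * n)] at h4
          omega
      rcases hcases with hc | hc
      · exact BalancedAux.key I₀ hn hI i₁.2 i₂.2 m hm1 hi2 hc
      · set m' := (i₁.1 - i₂.1).val with hm'def
        have hm'1 : 1 ≤ m' := by
          have h0 : i₁.1 - i₂.1 ≠ 0 := sub_ne_zero.mpr hvne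
          have : m' ≠ 0 := fun h => h0 ((ZMod.val_eq_zero _).mp h)
          omega
        have hm'lt : m' < 2 * n := ZMod.val_lt _
        have hi1 : i₁.1 = i₂.1 + (m' : ZMod (2 * n)) := (BalancedAux.coe_val_add i₂.1 i₁.1).symm
        have hmm' : ((m + m' : ℕ) : ZMod (2 * n)) = ((0 : ℕ) : ZMod (2 * n)) := by
          push_cast
          rw [hmdef, hm'def]
          simp [ZMod.natCast_val, ZMod.cast_id]
        have hmm'' : (m + m') % (2 * n) = 0 := by
          have := congrArg ZMod.val hmm'
          rw [ZMod.val_natCast, ZMod.val_natCast, Nat.zero_mod] at this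
          exact this
        have hmm3 : m + m' = 2 * n := by
          by_cases h : m + m' < 2 * n
          · rw [Nat.mod_eq_of_lt h] at hmm''
            omega
          · rw [Nat.mod_eq_sub_mod (le_of_not_gt h),
              Nat.mod_eq_of_lt (by omega : m + m' - 2 * n < 2 * n)] at hmm''
            omega
        have hsum' : m' + d₁ = d₂ := by omega
        exact BalancedAux.key I₀ hn hI i₂.2 i₁.2 m' hm'1 hi1 hsum'
    · have c1 : Fintype.card {i : ZMod (2 * n) // i ∈ I₀} = n := by
        rw [Fintype.card_coe, hI]
      have c2 : Fintype.card {x : ZMod (2 * n) // x ∉ I₀} = n := by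
        rw [Fintype.card_subtype_compl, ZMod.card, Fintype.card_coe, hI]
        omega
      rw [c1, c2]
  · intro i
    have hlt : BalancedAux.dIdx I₀ hn hI i.2 < 2 * n := by
      have := BalancedAux.dIdx_le I₀ hn hI i.2
      omega
    have hval : ((i.1 + ((BalancedAux.dIdx I₀ hn hI i.2 : ℕ) : ZMod (2 * n))) - i.1).val =
        BalancedAux.dIdx I₀ hn hI i.2 := by
      rw [add_sub_cancel_left]
      exact ZMod.val_cast_of_lt hlt
    have key := BalancedAux.card_between I₀ hn hI i.2
    dsimp only
    rw [add_sub_cancel_left, ZMod.val_cast_of_lt hlt]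
    exact key
end

section
/- Let n ≥ 1 be an integer and I₀ an n-element subset of ℤ/2n. Define finite subsets T_k and J_k of ℤ/2n recursively by T₀ = I₀ and, for 1 ≤ k ≤ n, J_k = { i ∈ I₀ \ (J₁ ∪ ⋯ ∪ J_{k−1}) : i + (2k−1) ∉ T_{k−1} } and T_k = T_{k−1} ∪ { i + (2k−1) : i ∈ J_k }, where i + (2k−1) is computed in ℤ/2n. Then the sets J₁, …, J_n are pairwise disjoint with union equal to I₀, and the map φ : I₀ → ℤ/2n defined by φ(i) = i + (2k−1) for i ∈ J_k is injective with image exactly the complement (ℤ/2n) \ I₀. (This is the correctness of the greedy shortest-annulus-first construction in the proof of the paper's Lemma 3: attaching annuli in order of increasing odd length 2k−1, with J_k the set of left feet of the annuli of length 2k−1 and T_k the set of indices no longer available, produces a tubed Heegaard surface with index I₀.) -/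
/-- Greedy shortest-annulus-first recursion: `greedyTJ n I₀ k = (T_k, J₁ ∪ ⋯ ∪ J_k)`,
where `T₀ = I₀`, and for `k ≥ 1`,
`J_k = { i ∈ I₀ \ (J₁ ∪ ⋯ ∪ J_{k-1}) : i + (2k-1) ∉ T_{k-1} }` and
`T_k = T_{k-1} ∪ { i + (2k-1) : i ∈ J_k }`, with `i + (2k-1)` computed in `ℤ/2n`. -/
def greedyTJ (n : ℕ) (I₀ : Finset (ZMod (2 * n))) :
    ℕ → Finset (ZMod (2 * n)) × Finset (ZMod (2 * n))
  | 0 => (I₀, ∅)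
  | k + 1 =>
    let p := greedyTJ n I₀ k
    let J := (I₀ \ p.2).filter fun i =>
      i + ((2 * (k + 1) - 1 : ℕ) : ZMod (2 * n)) ∉ p.1
    (p.1 ∪ J.image fun i => i + ((2 * (k + 1) - 1 : ℕ) : ZMod (2 * n)), p.2 ∪ J)

/-- The set `J_k` of left feet of the annuli of length `2k - 1` (for `k ≥ 1`):
`J_k = { i ∈ I₀ \ (J₁ ∪ ⋯ ∪ J_{k-1}) : i + (2k-1) ∉ T_{k-1} }`. -/
def greedyJ (n : ℕ) (I₀ : Finset (ZMod (2 * n))) (k : ℕ) : Finset (ZMod (2 * n)) :=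
  (I₀ \ (greedyTJ n I₀ (k - 1)).2).filter fun i =>
    i + ((2 * k - 1 : ℕ) : ZMod (2 * n)) ∉ (greedyTJ n I₀ (k - 1)).1

namespace GreedyAux

variable {n : ℕ} {I₀ : Finset (ZMod (2 * n))}

lemma TJ_succ (n : ℕ) (I₀ : Finset (ZMod (2 * n))) (k : ℕ) :
    greedyTJ n I₀ (k + 1) =
      ((greedyTJ n I₀ k).1 ∪ (greedyJ n I₀ (k + 1)).image
          (fun i => i + ((2 * (k + 1) - 1 : ℕ) : ZMod (2 * n))),
        (greedyTJ n I₀ k).2 ∪ greedyJ n I₀ (k + 1)) := rfl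

lemma mem_J {k : ℕ} {i : ZMod (2 * n)} :
    i ∈ greedyJ n I₀ k ↔ i ∈ I₀ ∧ i ∉ (greedyTJ n I₀ (k - 1)).2 ∧
      i + ((2 * k - 1 : ℕ) : ZMod (2 * n)) ∉ (greedyTJ n I₀ (k - 1)).1 := by
  simp [greedyJ, Finset.mem_filter, Finset.mem_sdiff, and_assoc]

lemma P_subset_I (k : ℕ) : (greedyTJ n I₀ k).2 ⊆ I₀ := by
  induction k with
  | zero => simp [greedyTJ]
  | succ k ih =>
    rw [TJ_succ]
    exact Finset.union_subset ih (fun x hx => (mem_J.mp hx).1)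

lemma P_mono {k l : ℕ} (h : k ≤ l) : (greedyTJ n I₀ k).2 ⊆ (greedyTJ n I₀ l).2 := by
  induction h with
  | refl => exact subset_rfl
  | step h ih =>
    refine ih.trans ?_
    rw [TJ_succ]
    exact Finset.subset_union_left

lemma T_mono {k l : ℕ} (h : k ≤ l) : (greedyTJ n I₀ k).1 ⊆ (greedyTJ n I₀ l).1 := by
  induction h with
  | refl => exact subset_rfl
  | step h ih =>
    refine ih.trans ?_
    rw [TJ_succ]
    exact Finset.subset_union_left

lemma I_subset_T (k : ℕ) : I₀ ⊆ (greedyTJ n I₀ k).1 := by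
  have h0 : (greedyTJ n I₀ 0).1 = I₀ := rfl
  rw [← h0]
  exact T_mono (Nat.zero_le k)

lemma J_subset_P {k : ℕ} (hk : 1 ≤ k) : greedyJ n I₀ k ⊆ (greedyTJ n I₀ k).2 := by
  obtain ⟨m, rfl⟩ : ∃ m, k = m + 1 := ⟨k - 1, by omega⟩
  rw [TJ_succ]
  exact Finset.subset_union_right

lemma image_subset_T {k : ℕ} (hk : 1 ≤ k) :
    (greedyJ n I₀ k).image (fun i => i + ((2 * k - 1 : ℕ) : ZMod (2 * n))) ⊆
      (greedyTJ n I₀ k).1 := by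
  obtain ⟨m, rfl⟩ : ∃ m, k = m + 1 := ⟨k - 1, by omega⟩
  rw [TJ_succ]
  exact Finset.subset_union_right

lemma Icc_succ (k : ℕ) : Finset.Icc 1 (k + 1) = insert (k + 1) (Finset.Icc 1 k) := by
  ext x; simp [Finset.mem_Icc, Finset.mem_insert]; omega

lemma P_eq (k : ℕ) : (greedyTJ n I₀ k).2 = (Finset.Icc 1 k).biUnion (greedyJ n I₀) := by
  induction k with
  | zero => simp [greedyTJ]
  | succ k ih =>
    rw [TJ_succ, ih, Icc_succ, Finset.biUnion_insert]
    ext x; simp only [Finset.mem_union]; tauto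

lemma T_eq (k : ℕ) :
    (greedyTJ n I₀ k).1 = I₀ ∪ (Finset.Icc 1 k).biUnion
      (fun m => (greedyJ n I₀ m).image (fun i => i + ((2 * m - 1 : ℕ) : ZMod (2 * n)))) := by
  induction k with
  | zero => simp [greedyTJ]
  | succ k ih =>
    rw [TJ_succ, ih, Icc_succ, Finset.biUnion_insert]
    ext x; simp only [Finset.mem_union]; tauto

lemma card_T (k : ℕ) :
    ((greedyTJ n I₀ k).1).card = I₀.card + ((greedyTJ n I₀ k).2).card := by
  induction k with
  | zero => simp [greedyTJ]
  | succ k ih =>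
    rw [TJ_succ]
    have hd1 : Disjoint (greedyTJ n I₀ k).1
        ((greedyJ n I₀ (k + 1)).image fun i => i + ((2 * (k + 1) - 1 : ℕ) : ZMod (2 * n))) := by
      rw [Finset.disjoint_right]
      intro a ha
      simp only [Finset.mem_image] at ha
      obtain ⟨j, hj, rfl⟩ := ha
      have := (mem_J.mp hj).2.2
      simpa [Nat.add_sub_cancel] using this
    have hd2 : Disjoint (greedyTJ n I₀ k).2 (greedyJ n I₀ (k + 1)) := by
      rw [Finset.disjoint_right]
      intro a ha
      have := (mem_J.mp ha).2.1
      simpa [Nat.add_sub_cancel] using this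
    rw [Finset.card_union_of_disjoint hd1, Finset.card_union_of_disjoint hd2,
      Finset.card_image_of_injective _ (add_left_injective _), ih, Nat.add_assoc]

lemma cast_val [NeZero (2 * n)] {k : ℕ} (h1 : 1 ≤ k) (h2 : k ≤ n) :
    ((2 * k - 1 : ℕ) : ZMod (2 * n)).val = 2 * k - 1 :=
  ZMod.val_natCast_of_lt (by omega)

lemma cast_inj [NeZero (2 * n)] {k l : ℕ} (hk1 : 1 ≤ k) (hk2 : k ≤ n)
    (hl1 : 1 ≤ l) (hl2 : l ≤ n)
    (h : ((2 * k - 1 : ℕ) : ZMod (2 * n)) = ((2 * l - 1 : ℕ) : ZMod (2 * n))) : k = l := by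
  have := congrArg ZMod.val h
  rw [cast_val hk1 hk2, cast_val hl1 hl2] at this
  omega

lemma cast_ne_zero [NeZero (2 * n)] {k : ℕ} (hk1 : 1 ≤ k) (hk2 : k ≤ n) :
    ((2 * k - 1 : ℕ) : ZMod (2 * n)) ≠ 0 := by
  intro h
  have := congrArg ZMod.val h
  rw [cast_val hk1 hk2, ZMod.val_zero] at this
  omega

lemma cast_odd {k : ℕ} (hk : 1 ≤ k) : ((2 * k - 1 : ℕ) : ZMod 2) = 1 := by
  have h : 2 * k - 1 = 2 * (k - 1) + 1 := by omega
  rw [h]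
  push_cast
  rw [show (2 : ZMod 2) = 0 by decide]
  ring

lemma parity_contra {k l m : ℕ} (hk : 1 ≤ k) (hl : 1 ≤ l) (hm : 1 ≤ m)
    (h : ((2 * k - 1 : ℕ) : ZMod (2 * n)) =
      ((2 * l - 1 : ℕ) : ZMod (2 * n)) + ((2 * m - 1 : ℕ) : ZMod (2 * n))) : False := by
  have h2 : (2 : ℕ) ∣ 2 * n := ⟨n, rfl⟩
  have h3 := congrArg (ZMod.castHom h2 (ZMod 2)) h
  simp only [map_add, map_natCast] at h3
  rw [cast_odd hk, cast_odd hl, cast_odd hm] at h3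
  exact absurd h3 (by decide)

lemma J_disj {k l : ℕ} (hk : 1 ≤ k) (hkl : k < l) :
    Disjoint (greedyJ n I₀ k) (greedyJ n I₀ l) := by
  rw [Finset.disjoint_left]
  intro a ha hal
  exact (mem_J.mp hal).2.1 (P_mono (by omega) (J_subset_P hk ha))

lemma complete [NeZero (2 * n)] (hn : 1 ≤ n) (hI : I₀.card = n) :
    I₀ ⊆ (greedyTJ n I₀ n).2 := by
  classical
  intro i hi
  by_contra hiP
  have stepA : ∀ k, 1 ≤ k → k ≤ n →
      i + ((2 * k - 1 : ℕ) : ZMod (2 * n)) ∈ (greedyTJ n I₀ (k - 1)).1 := by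
    intro k hk1 hk2
    by_contra hT
    have hiJ : i ∈ greedyJ n I₀ k :=
      mem_J.mpr ⟨hi, fun hP => hiP (P_mono (by omega) hP), hT⟩
    exact hiP (P_mono hk2 (J_subset_P hk1 hiJ))
  have stepB : ∀ k, 1 ≤ k → k ≤ n →
      i + ((2 * k - 1 : ℕ) : ZMod (2 * n)) ∈ I₀ ∨
      ∃ j, ∃ m, (1 ≤ m ∧ m ≤ n) ∧ j ∈ greedyJ n I₀ m ∧
        i + ((2 * k - 1 : ℕ) : ZMod (2 * n)) = j + ((2 * m - 1 : ℕ) : ZMod (2 * n)) := by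
    intro k hk1 hk2
    have h := stepA k hk1 hk2
    rw [T_eq] at h
    rcases Finset.mem_union.mp h with h | h
    · exact Or.inl h
    · simp only [Finset.mem_biUnion, Finset.mem_Icc, Finset.mem_image] at h
      obtain ⟨m, ⟨hm1, hm2⟩, j, hj, hje⟩ := h
      exact Or.inr ⟨j, m, ⟨hm1, by omega⟩, hj, hje.symm⟩
  set Q : ℕ → Prop := fun k => ∃ j, ∃ m, (1 ≤ m ∧ m ≤ n) ∧ j ∈ greedyJ n I₀ m ∧
    i + ((2 * k - 1 : ℕ) : ZMod (2 * n)) = j + ((2 * m - 1 : ℕ) : ZMod (2 * n)) with hQdef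
  have hQdec : ∀ k, Decidable (Q k) := fun k => Classical.dec _
  set f : ℕ → ZMod (2 * n) := fun k =>
    if h : Q k then h.choose else i + ((2 * k - 1 : ℕ) : ZMod (2 * n)) with hfdef
  have hfmem : ∀ k ∈ Finset.Icc 1 n, f k ∈ I₀.erase i := by
    intro k hk
    rw [Finset.mem_Icc] at hk
    by_cases h : Q k
    · rw [hfdef]
      simp only
      rw [dif_pos h]
      obtain ⟨m, ⟨hm1, hm2⟩, hjJ, hje⟩ := h.choose_spec
      refine Finset.mem_erase.mpr ⟨?_, (mem_J.mp hjJ).1⟩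
      exact fun he => hiP (P_mono hm2 (J_subset_P hm1 (he ▸ hjJ)))
    · rw [hfdef]
      simp only
      rw [dif_neg h]
      rcases stepB k hk.1 hk.2 with hc | hc
      · refine Finset.mem_erase.mpr ⟨?_, hc⟩
        intro he
        have h0 : ((2 * k - 1 : ℕ) : ZMod (2 * n)) = 0 := by
          have h0' := he
          rwa [add_eq_left] at h0'
        exact cast_ne_zero hk.1 hk.2 h0
      · exact absurd hc h
  have hinj : Set.InjOn f (Finset.Icc 1 n : Finset ℕ) := by
    intro k hk k' hk' hfe
    simp only [Finset.coe_Icc, Set.mem_Icc] at hk hk'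
    by_cases h : Q k <;> by_cases h' : Q k'
    · rw [hfdef] at hfe
      simp only at hfe
      rw [dif_pos h, dif_pos h'] at hfe
      obtain ⟨m, ⟨hm1, hm2⟩, hjJ, hje⟩ := h.choose_spec
      obtain ⟨m', ⟨hm1', hm2'⟩, hjJ', hje'⟩ := h'.choose_spec
      have hmm : m = m' := by
        by_contra hne
        rcases Nat.lt_or_ge m m' with hlt | hge
        · exact Finset.disjoint_left.mp (J_disj hm1 hlt) hjJ (hfe ▸ hjJ')
        · have hlt : m' < m := by omega
          exact Finset.disjoint_left.mp (J_disj hm1' hlt) hjJ' (hfe ▸ hjJ)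
      subst hmm
      rw [hfe] at hje
      have heq : i + ((2 * k - 1 : ℕ) : ZMod (2 * n)) =
          i + ((2 * k' - 1 : ℕ) : ZMod (2 * n)) := hje.trans hje'.symm
      exact cast_inj hk.1 hk.2 hk'.1 hk'.2 (add_left_cancel heq)
    · rw [hfdef] at hfe
      simp only at hfe
      rw [dif_pos h, dif_neg h'] at hfe
      obtain ⟨m, ⟨hm1, hm2⟩, hjJ, hje⟩ := h.choose_spec
      rw [hfe, add_assoc] at hje
      exact (parity_contra hk.1 hk'.1 hm1 (add_left_cancel hje)).elim
    · rw [hfdef] at hfe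
      simp only at hfe
      rw [dif_neg h, dif_pos h'] at hfe
      obtain ⟨m, ⟨hm1, hm2⟩, hjJ, hje⟩ := h'.choose_spec
      rw [← hfe, add_assoc] at hje
      exact (parity_contra hk'.1 hk.1 hm1 (add_left_cancel hje)).elim
    · rw [hfdef] at hfe
      simp only at hfe
      rw [dif_neg h, dif_neg h'] at hfe
      exact cast_inj hk.1 hk.2 hk'.1 hk'.2 (add_left_cancel hfe)
  have hcard := Finset.card_le_card_of_injOn f hfmem hinj
  rw [Nat.card_Icc, Finset.card_erase_of_mem hi, hI] at hcard
  omega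

end GreedyAux

open GreedyAux in
/-- Correctness of the greedy shortest-annulus-first construction:
the sets `J₁, …, J_n` are pairwise disjoint with union `I₀`, and the map
`φ : I₀ → ℤ/2n` given by `φ i = i + (2k-1)` for `i ∈ J_k` is injective with image
exactly the complement `(ℤ/2n) \ I₀`; the latter is expressed by saying that the
translates `J_k + (2k-1)` are pairwise disjoint with union `(ℤ/2n) \ I₀`. -/
theorem greedy_construction_correct (n : ℕ) (hn : 1 ≤ n) [NeZero (2 * n)]
    (I₀ : Finset (ZMod (2 * n))) (hI : I₀.card = n) :
    (∀ k ∈ Finset.Icc 1 n, ∀ l ∈ Finset.Icc 1 n, k ≠ l →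
        Disjoint (greedyJ n I₀ k) (greedyJ n I₀ l)) ∧
    (Finset.Icc 1 n).biUnion (greedyJ n I₀) = I₀ ∧
    (∀ k ∈ Finset.Icc 1 n, ∀ l ∈ Finset.Icc 1 n, k ≠ l →
        Disjoint
          ((greedyJ n I₀ k).image fun i => i + ((2 * k - 1 : ℕ) : ZMod (2 * n)))
          ((greedyJ n I₀ l).image fun i => i + ((2 * l - 1 : ℕ) : ZMod (2 * n)))) ∧
    (Finset.Icc 1 n).biUnion
        (fun k => (greedyJ n I₀ k).image fun i =>
          i + ((2 * k - 1 : ℕ) : ZMod (2 * n))) =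
      Finset.univ \ I₀ := by
  have hPI : (greedyTJ n I₀ n).2 = I₀ :=
    Finset.Subset.antisymm (P_subset_I n) (complete hn hI)
  have imgdisj : ∀ k l : ℕ, 1 ≤ k → k < l →
      Disjoint
        ((greedyJ n I₀ k).image fun i => i + ((2 * k - 1 : ℕ) : ZMod (2 * n)))
        ((greedyJ n I₀ l).image fun i => i + ((2 * l - 1 : ℕ) : ZMod (2 * n))) := by
    intro k l hk1 hkl
    rw [Finset.disjoint_left]
    intro x hx hxl
    simp only [Finset.mem_image] at hxl
    obtain ⟨b, hb, hbe⟩ := hxl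
    have h1 : x ∈ (greedyTJ n I₀ (l - 1)).1 :=
      T_mono (by omega) (image_subset_T hk1 hx)
    have h2 := (mem_J.mp hb).2.2
    rw [hbe] at h2
    exact h2 h1
  refine ⟨?_, ?_, ?_, ?_⟩
  · intro k hk l hl hne
    rw [Finset.mem_Icc] at hk hl
    rcases Nat.lt_or_ge k l with hlt | hge
    · exact J_disj hk.1 hlt
    · have hlt : l < k := by omega
      exact (J_disj hl.1 hlt).symm
  · rw [← P_eq, hPI]
  · intro k hk l hl hne
    rw [Finset.mem_Icc] at hk hl
    rcases Nat.lt_or_ge k l with hlt | hge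
    · exact imgdisj k l hk.1 hlt
    · have hlt : l < k := by omega
      exact (imgdisj l k hl.1 hlt).symm
  · have hcard : ((greedyTJ n I₀ n).1).card = 2 * n := by
      rw [card_T, hPI, hI]; ring
    have hTuniv : (greedyTJ n I₀ n).1 = Finset.univ :=
      Finset.eq_univ_of_card _ (by rw [hcard, ZMod.card])
    ext x
    simp only [Finset.mem_sdiff, Finset.mem_univ, true_and]
    constructor
    · intro hx
      simp only [Finset.mem_biUnion, Finset.mem_Icc, Finset.mem_image] at hx
      obtain ⟨m, ⟨hm1, hm2⟩, j, hj, rfl⟩ := hx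
      exact fun hmem => (mem_J.mp hj).2.2 (I_subset_T _ hmem)
    · intro hx
      have hxT : x ∈ (greedyTJ n I₀ n).1 := hTuniv ▸ Finset.mem_univ x
      rw [T_eq] at hxT
      rcases Finset.mem_union.mp hxT with h | h
      · exact absurd h hx
      · exact h
end
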